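/- arXiv:1007.2364 — 5 statements merged into one kernel-verified Lean document; each statement's English description precedes it below -/
import Mathlib

section
/- Soundness of the ⊔-elimination rule: suppose Φ₁ maps realizers of Γ₁ to realizers of t:C₁⊔C₂; Φ₂ maps realizers of Γ₂∪{t:C₁} to realizers of K; and Φ₃ maps realizers of Γ₃∪{t:C₂} to realizers of K (each uniformly over all models). Define Φ(γ̄) = Φ₂(γ̄₂,α) if Φ₁(γ̄₁) = (1,α), and Φ(γ̄) = Φ₃(γ̄₃,α) if Φ₁(γ̄₁) = (2,α). Then for every model M, M ⊩_{γ̄} Γ₁∪Γ₂∪Γ₃ implies M ⊩_{Φ(γ̄)} K. -/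
namespace ITSem

inductive Concept (NC NR : Type) : Type where
  | atom : NC → Concept NC NR
  | neg : Concept NC NR → Concept NC NR
  | inter : Concept NC NR → Concept NC NR → Concept NC NR
  | union : Concept NC NR → Concept NC NR → Concept NC NR
  | ex : NR → Concept NC NR → Concept NC NR
  | all : NR → Concept NC NR → Concept NC NR

inductive Formula (N NC NR : Type) : Type where
  | bot : Formula N NC NR
  | role : N → N → NR → Formula N NC NR
  | conc : N → Concept NC NR → Formula N NC NR
  | subsum : NC → Concept NC NR → Formula N NC NR

structure Model (N NC NR : Type) where
  D : Type
  dNonempty : Nonempty D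
  indiv : N → D
  cname : NC → Set D
  rel : NR → D → D → Prop

def Model.interp {N NC NR : Type} (M : Model N NC NR) : Concept NC NR → Set M.D
  | .atom A => M.cname A
  | .neg C => (M.interp C)ᶜ
  | .inter C D => M.interp C ∩ M.interp D
  | .union C D => M.interp C ∪ M.interp D
  | .ex R C => {x | ∃ y, M.rel R x y ∧ y ∈ M.interp C}
  | .all R C => {x | ∀ y, M.rel R x y → y ∈ M.interp C}

def Model.valid {N NC NR : Type} (M : Model N NC NR) : Formula N NC NR → Prop
  | .bot => False
  | .role c d R => M.rel R (M.indiv c) (M.indiv d)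
  | .conc c C => M.indiv c ∈ M.interp C
  | .subsum A C => M.cname A ⊆ M.interp C

def ITc (N NC NR : Type) : Concept NC NR → Type
  | .atom _ => Unit
  | .neg _ => Unit
  | .inter C D => ITc N NC NR C × ITc N NC NR D
  | .union C D => ITc N NC NR C ⊕ ITc N NC NR D
  | .ex _ C => N × ITc N NC NR C
  | .all _ C => N → ITc N NC NR C

def ITf (N NC NR : Type) : Formula N NC NR → Type
  | .bot => Unit
  | .role _ _ _ => Unit
  | .conc _ C => ITc N NC NR C
  | .subsum _ C => N → ITc N NC NR C

def realc {N NC NR : Type} (M : Model N NC NR) :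
    (C : Concept NC NR) → N → ITc N NC NR C → Prop
  | .atom A, c, _ => M.indiv c ∈ M.cname A
  | .neg C, c, _ => M.indiv c ∈ M.interp (.neg C)
  | .inter C D, c, η => realc M C c η.1 ∧ realc M D c η.2
  | .union C D, c, η =>
      match η with
      | Sum.inl α => realc M C c α
      | Sum.inr β => realc M D c β
  | .ex R C, c, η => M.rel R (M.indiv c) (M.indiv η.1) ∧ realc M C η.1 η.2
  | .all R C, c, φ =>
      M.indiv c ∈ M.interp (.all R C) ∧
      ∀ d, M.rel R (M.indiv c) (M.indiv d) → realc M C d (φ d)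

def real {N NC NR : Type} (M : Model N NC NR) :
    (K : Formula N NC NR) → ITf N NC NR K → Prop
  | .bot, _ => False
  | .role c d R, _ => M.rel R (M.indiv c) (M.indiv d)
  | .conc c C, η => realc M C c η
  | .subsum A C, φ =>
      M.cname A ⊆ M.interp C ∧
      ∀ d, M.indiv d ∈ M.cname A → realc M C d (φ d)

def ITl (N NC NR : Type) : List (Formula N NC NR) → Type
  | [] => PUnit
  | K :: Γ => ITf N NC NR K × ITl N NC NR Γ

def reall {N NC NR : Type} (M : Model N NC NR) :
    (Γ : List (Formula N NC NR)) → ITl N NC NR Γ → Prop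
  | [], _ => True
  | K :: Γ, η => real M K η.1 ∧ reall M Γ η.2

def splitIT {N NC NR : Type} :
    (Γ₁ Γ₂ : List (Formula N NC NR)) → ITl N NC NR (Γ₁ ++ Γ₂) →
      ITl N NC NR Γ₁ × ITl N NC NR Γ₂
  | [], _, γ => (PUnit.unit, γ)
  | _ :: Γ₁, Γ₂, γ => ((γ.1, (splitIT Γ₁ Γ₂ γ.2).1), (splitIT Γ₁ Γ₂ γ.2).2)

theorem reall_split {N NC NR : Type} (M : Model N NC NR) :
    ∀ (Γ₁ Γ₂ : List (Formula N NC NR)) (γ : ITl N NC NR (Γ₁ ++ Γ₂)),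
      reall M (Γ₁ ++ Γ₂) γ →
      reall M Γ₁ (splitIT Γ₁ Γ₂ γ).1 ∧ reall M Γ₂ (splitIT Γ₁ Γ₂ γ).2
  | [], Γ₂, γ, h => ⟨trivial, h⟩
  | K :: Γ₁, Γ₂, γ, h =>
    let ih := reall_split M Γ₁ Γ₂ γ.2 h.2
    ⟨⟨h.1, ih.1⟩, ih.2⟩

theorem union_elim_sound {N NC NR : Type} (Γ₁ Γ₂ Γ₃ : List (Formula N NC NR)) (t : N)
    (C₁ C₂ : Concept NC NR) (K : Formula N NC NR)
    (Φ₁ : ITl N NC NR Γ₁ → ITc N NC NR C₁ ⊕ ITc N NC NR C₂)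
    (Φ₂ : ITl N NC NR Γ₂ → ITc N NC NR C₁ → ITf N NC NR K)
    (Φ₃ : ITl N NC NR Γ₃ → ITc N NC NR C₂ → ITf N NC NR K)
    (h₁ : ∀ (M : Model N NC NR) γ₁, reall M Γ₁ γ₁ → realc M (.union C₁ C₂) t (Φ₁ γ₁))
    (h₂ : ∀ (M : Model N NC NR) γ₂ α, reall M Γ₂ γ₂ → realc M C₁ t α → real M K (Φ₂ γ₂ α))
    (h₃ : ∀ (M : Model N NC NR) γ₃ β, reall M Γ₃ γ₃ → realc M C₂ t β → real M K (Φ₃ γ₃ β)) :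
    ∀ (M : Model N NC NR) (γ : ITl N NC NR (Γ₁ ++ (Γ₂ ++ Γ₃))),
      reall M (Γ₁ ++ (Γ₂ ++ Γ₃)) γ →
      real M K
        (match Φ₁ (splitIT Γ₁ (Γ₂ ++ Γ₃) γ).1 with
          | Sum.inl α => Φ₂ (splitIT Γ₂ Γ₃ (splitIT Γ₁ (Γ₂ ++ Γ₃) γ).2).1 α
          | Sum.inr β => Φ₃ (splitIT Γ₂ Γ₃ (splitIT Γ₁ (Γ₂ ++ Γ₃) γ).2).2 β) := by
  intro M γ hγ
  obtain ⟨hγ₁, hγ₂₃⟩ := reall_split M Γ₁ (Γ₂ ++ Γ₃) γ hγ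
  obtain ⟨hγ₂, hγ₃⟩ := reall_split M Γ₂ Γ₃ _ hγ₂₃
  have h := h₁ M _ hγ₁
  cases hΦ : Φ₁ (splitIT Γ₁ (Γ₂ ++ Γ₃) γ).1 with
  | inl α => rw [hΦ] at h; exact h₂ M _ α hγ₂ h
  | inr β => rw [hΦ] at h; exact h₃ M _ β hγ₃ h

end ITSem
end

section
/- Soundness of the subsumption-elimination rule (⊑E): if Φ maps realizers of Γ to realizers (necessarily tt) of t:A uniformly, then the operator (γ̄, φ) ↦ φ(t) maps realizers of Γ∪{A⊑C} to realizers of t:C: if M ⊩_{γ̄} Γ and M ⊩_φ A⊑C, then M ⊩_{φ(t)} t:C. -/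
namespace ITSem

theorem subsum_elim_sound {N NC NR : Type} (Γ : List (Formula N NC NR)) (t : N)
    (A : NC) (C : Concept NC NR)
    (Φ : ITl N NC NR Γ → ITc N NC NR (.atom A))
    (hΦ : ∀ (M : Model N NC NR) γ, reall M Γ γ → realc M (.atom A) t (Φ γ)) :
    ∀ (M : Model N NC NR) (γ : ITl N NC NR Γ) (φ : ITf N NC NR (.subsum A C)),
      reall M Γ γ → real M (.subsum A C) φ → realc M C t (φ t) := by
  intro M γ φ hγ hφ2
  exact hφ2.2 t (hΦ M γ hγ)

end ITSem
end

section
/- Soundness of the SEQ composition rule for two services: let (s₁,Φ₁) with specification A₁ ⇒ B₁ and (s₂,Φ₂) with specification A₂ ⇒ B₂ be service definitions, and let Φ_b1, Φ_b2, Φ_c be operators witnessing, in every model M of the environment, that realizers of x:A map to realizers of x:A₁, realizers of x:B₁ map to realizers of x:A₂, and realizers of x:B₂ map to realizers of x:B, respectively (uniformly for all x∈N). Then Φ_s := Φ_c ∘ Φ₂ ∘ Φ_b2 ∘ Φ₁ ∘ Φ_b1 uniformly solves the specification s(x) :: A ⇒ B in every model of the environment. -/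
namespace ITSem

structure Env (N NC NR : Type) (n : ℕ) where
  T : List (Formula N NC NR)
  η : ITl N NC NR T
  pre : Fin n → Concept NC NR
  post : Fin n → Concept NC NR
  impl : (i : Fin n) → ITc N NC NR (pre i) → ITc N NC NR (post i)

def UniformlySolves {N NC NR : Type} (M : Model N NC NR) (P Q : Concept NC NR)
    (Φ : ITc N NC NR P → ITc N NC NR Q) : Prop :=
  ∀ (t : N) (α : ITc N NC NR P), realc M P t α → realc M Q t (Φ α)

def Env.IsModel {N NC NR : Type} {n : ℕ} (E : Env N NC NR n) (M : Model N NC NR) : Prop :=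
  reall M E.T E.η ∧ ∀ i, UniformlySolves M (E.pre i) (E.post i) (E.impl i)

theorem seq_rule_sound {N NC NR : Type} {n : ℕ} (E : Env N NC NR n)
    (A A₁ B₁ A₂ B₂ B : Concept NC NR)
    (Φ₁ : ITc N NC NR A₁ → ITc N NC NR B₁) (Φ₂ : ITc N NC NR A₂ → ITc N NC NR B₂)
    (Φb1 : ITc N NC NR A → ITc N NC NR A₁) (Φb2 : ITc N NC NR B₁ → ITc N NC NR A₂)
    (Φc : ITc N NC NR B₂ → ITc N NC NR B)
    (h₁ : ∀ (M : Model N NC NR), E.IsModel M → UniformlySolves M A₁ B₁ Φ₁)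
    (h₂ : ∀ (M : Model N NC NR), E.IsModel M → UniformlySolves M A₂ B₂ Φ₂)
    (hb1 : ∀ (M : Model N NC NR), E.IsModel M →
      ∀ (x : N) α, realc M A x α → realc M A₁ x (Φb1 α))
    (hb2 : ∀ (M : Model N NC NR), E.IsModel M →
      ∀ (x : N) β, realc M B₁ x β → realc M A₂ x (Φb2 β))
    (hc : ∀ (M : Model N NC NR), E.IsModel M →
      ∀ (x : N) β, realc M B₂ x β → realc M B x (Φc β)) :
    ∀ (M : Model N NC NR), E.IsModel M →
      UniformlySolves M A B (fun α => Φc (Φ₂ (Φb2 (Φ₁ (Φb1 α))))) := by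
  intro M hM t α hα
  exact hc M hM t _ (h₂ M hM t _ (hb2 M hM t _ (h₁ M hM t _ (hb1 M hM t _ hα))))

end ITSem
end

section
/- Soundness of the AND composition rule for two services: let (s₁,Φ₁) : A₁ ⇒ B₁ and (s₂,Φ₂) : A₂ ⇒ B₂ be service definitions, Φ_a1, Φ_a2 operators mapping (in every model of the environment, uniformly over x∈N) realizers of x:A to realizers of x:A₁ and x:A₂ respectively, and Φ_b an operator mapping realizers of x:B₁⊓B₂ to realizers of x:B. Then Φ_s(α) := Φ_b(Φ₁(Φ_a1(α)), Φ₂(Φ_a2(α))) uniformly solves the specification s(x) :: A ⇒ B in every model of the environment. -/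
namespace ITSem

theorem and_rule_sound {N NC NR : Type} {n : ℕ} (E : Env N NC NR n)
    (A A₁ B₁ A₂ B₂ B : Concept NC NR)
    (Φ₁ : ITc N NC NR A₁ → ITc N NC NR B₁) (Φ₂ : ITc N NC NR A₂ → ITc N NC NR B₂)
    (Φa1 : ITc N NC NR A → ITc N NC NR A₁) (Φa2 : ITc N NC NR A → ITc N NC NR A₂)
    (Φb : ITc N NC NR (.inter B₁ B₂) → ITc N NC NR B)
    (h₁ : ∀ (M : Model N NC NR), E.IsModel M → UniformlySolves M A₁ B₁ Φ₁)
    (h₂ : ∀ (M : Model N NC NR), E.IsModel M → UniformlySolves M A₂ B₂ Φ₂)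
    (ha1 : ∀ (M : Model N NC NR), E.IsModel M →
      ∀ (x : N) α, realc M A x α → realc M A₁ x (Φa1 α))
    (ha2 : ∀ (M : Model N NC NR), E.IsModel M →
      ∀ (x : N) α, realc M A x α → realc M A₂ x (Φa2 α))
    (hb : ∀ (M : Model N NC NR), E.IsModel M →
      ∀ (x : N) (β : ITc N NC NR (.inter B₁ B₂)),
        realc M (.inter B₁ B₂) x β → realc M B x (Φb β)) :
    ∀ (M : Model N NC NR), E.IsModel M →
      UniformlySolves M A B (fun α => Φb (Φ₁ (Φa1 α), Φ₂ (Φa2 α))) := by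
  intro M hM t α hα
  exact hb M hM t _ ⟨h₁ M hM t _ (ha1 M hM t α hα), h₂ M hM t _ (ha2 M hM t α hα)⟩

end ITSem
end

section
/- Soundness of compositions (general theorem): for every composition tree Π over an environment E built using the rules AND, CASE, SEQ, AX, ENV (with valid applicability conditions witnessed by sound operators), with main sequent s(x) :: P ⇒ Q, the extracted function Φ_s uniformly solves s in every model M of E. The proof is by induction on the structure of Π. -/
namespace ITSem

inductive Comp {N NC NR : Type} {n : ℕ} (E : Env N NC NR n) :
    Concept NC NR → Concept NC NR → Type 1 where
  | env (i : Fin n) : Comp E (E.pre i) (E.post i)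
  | ax (A B : Concept NC NR) (Φ : ITc N NC NR A → ITc N NC NR B)
      (h : ∀ (M : Model N NC NR), E.IsModel M →
        ∀ (x : N) α, realc M A x α → realc M B x (Φ α)) : Comp E A B
  | and (A B : Concept NC NR) {m : ℕ} (As Bs : Fin m → Concept NC NR)
      (Φa : (k : Fin m) → ITc N NC NR A → ITc N NC NR (As k))
      (Φb : ((k : Fin m) → ITc N NC NR (Bs k)) → ITc N NC NR B)
      (ha : ∀ (M : Model N NC NR), E.IsModel M → ∀ (k : Fin m) (x : N) α,
        realc M A x α → realc M (As k) x (Φa k α))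
      (hb : ∀ (M : Model N NC NR), E.IsModel M →
        ∀ (x : N) (β : (k : Fin m) → ITc N NC NR (Bs k)),
          (∀ k, realc M (Bs k) x (β k)) → realc M B x (Φb β))
      (subs : (k : Fin m) → Comp E (As k) (Bs k)) : Comp E A B
  | case (A B : Concept NC NR) {m : ℕ} (As Bs : Fin m → Concept NC NR)
      (Φa : ITc N NC NR A → Σ k : Fin m, ITc N NC NR (As k))
      (Φb : (k : Fin m) → ITc N NC NR (Bs k) → ITc N NC NR B)
      (ha : ∀ (M : Model N NC NR), E.IsModel M → ∀ (x : N) α,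
        realc M A x α → realc M (As (Φa α).1) x (Φa α).2)
      (hb : ∀ (M : Model N NC NR), E.IsModel M → ∀ (k : Fin m) (x : N) β,
        realc M (Bs k) x β → realc M B x (Φb k β))
      (subs : (k : Fin m) → Comp E (As k) (Bs k)) : Comp E A B
  | seq (A A₁ B₁ A₂ B₂ B : Concept NC NR)
      (Φb1 : ITc N NC NR A → ITc N NC NR A₁)
      (Φb2 : ITc N NC NR B₁ → ITc N NC NR A₂)
      (Φc : ITc N NC NR B₂ → ITc N NC NR B)
      (hb1 : ∀ (M : Model N NC NR), E.IsModel M → ∀ (x : N) α,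
        realc M A x α → realc M A₁ x (Φb1 α))
      (hb2 : ∀ (M : Model N NC NR), E.IsModel M → ∀ (x : N) β,
        realc M B₁ x β → realc M A₂ x (Φb2 β))
      (hc : ∀ (M : Model N NC NR), E.IsModel M → ∀ (x : N) β,
        realc M B₂ x β → realc M B x (Φc β))
      (sub1 : Comp E A₁ B₁) (sub2 : Comp E A₂ B₂) : Comp E A B

def Comp.extract {N NC NR : Type} {n : ℕ} {E : Env N NC NR n}
    {A B : Concept NC NR} : Comp E A B → (ITc N NC NR A → ITc N NC NR B)
  | .env i => E.impl i
  | .ax _ _ Φ _ => Φ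
  | .and _ _ _ _ Φa Φb _ _ subs =>
      fun α => Φb (fun k => (subs k).extract (Φa k α))
  | .case _ _ _ _ Φa Φb _ _ subs =>
      fun α => Φb (Φa α).1 ((subs (Φa α).1).extract (Φa α).2)
  | .seq _ _ _ _ _ _ Φb1 Φb2 Φc _ _ _ sub1 sub2 =>
      fun α => Φc (sub2.extract (Φb2 (sub1.extract (Φb1 α))))

theorem composition_sound {N NC NR : Type} {n : ℕ} (E : Env N NC NR n)
    (A B : Concept NC NR) (comp : Comp E A B) :
    ∀ (M : Model N NC NR), E.IsModel M → UniformlySolves M A B comp.extract := by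
  induction comp with
  | env i => intro M hM t α h; exact hM.2 i t α h
  | ax A B Φ h => intro M hM t α hα; exact h M hM t α hα
  | and A B As Bs Φa Φb ha hb subs ih =>
      intro M hM t α hα
      exact hb M hM t _ (fun k => ih k M hM t _ (ha M hM k t α hα))
  | case A B As Bs Φa Φb ha hb subs ih =>
      intro M hM t α hα
      exact hb M hM _ t _ (ih _ M hM t _ (ha M hM t α hα))
  | seq A A₁ B₁ A₂ B₂ B Φb1 Φb2 Φc hb1 hb2 hc sub1 sub2 ih1 ih2 =>
      intro M hM t α hα
      exact hc M hM t _ (ih2 M hM t _ (hb2 M hM t _ (ih1 M hM t _ (hb1 M hM t α hα))))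

end ITSem
end
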